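/- Let v_f > 0, k_j > 0, 0 < v_c < v_f, k_c = (v_f - v_c)·k_j/v_f, and fix an average density K with k_j/2 < K ≤ (k_c + k_j)/2. Over the admissible set S_K = {(k1,k2) : 0 ≤ k1 ≤ k_j, 0 ≤ k2 ≤ k_j, k1 + k2 = 2K}, the cruising space-mean speed W(k1,k2) = (k1·G(k1) + k2·min{v_c, G(k2)})/(k1 + k2) attains its minimum value v_c - v_c·k_j/(2K), and this minimum is attained at (k1, k2) = (k_j, 2K - k_j), i.e., with bin 1 gridlocked at jam density. -/

import Mathlib

/-- Greenshields speed at density `k`, with free-flow speed `vf` and jam density `kj`. -/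
noncomputable def G (vf kj k : ℝ) : ℝ := vf * (1 - k / kj)

/-- Two-bin network space-mean speed where all vehicles in bin 2 cruise for parking
at desired cruising speed `vc` (worst case). -/
noncomputable def W (vf kj vc k1 k2 : ℝ) : ℝ :=
  (k1 * G vf kj k1 + k2 * min vc (G vf kj k2)) / (k1 + k2)

/-- Admissible two-bin configurations at network average density `K`. -/
def SK (kj K : ℝ) : Set (ℝ × ℝ) :=
  {p | 0 ≤ p.1 ∧ p.1 ≤ kj ∧ 0 ≤ p.2 ∧ p.2 ≤ kj ∧ p.1 + p.2 = 2 * K}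

/-- With cruising (worst case), for `kj/2 < K ≤ (kc + kj)/2`, the minimum of `W`
over `S_K` is `vc - vc kj / (2K)`, attained at `(kj, 2K - kj)` with bin 1
gridlocked at jam density. -/
theorem cruising_lower_envelope_3 (vf kj vc K : ℝ)
    (hvf : 0 < vf) (hkj : 0 < kj) (hvc0 : 0 < vc) (hvcf : vc < vf)
    (hK0 : kj / 2 < K) (hK : K ≤ ((vf - vc) * kj / vf + kj) / 2) :
    (∀ p ∈ SK kj K, vc - vc * kj / (2 * K) ≤ W vf kj vc p.1 p.2) ∧
    ((kj, 2 * K - kj) ∈ SK kj K ∧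
      W vf kj vc kj (2 * K - kj) = vc - vc * kj / (2 * K)) := by
  have hK2 : 0 < 2 * K := by linarith
  have hKne : (2 * K) ≠ 0 := ne_of_gt hK2
  have hkjne : kj ≠ 0 := ne_of_gt hkj
  have hvfne : vf ≠ 0 := ne_of_gt hvf
  -- from hK: vf * (2K - kj) ≤ (vf - vc) * kj
  have hKc : vf * (2 * K - kj) ≤ (vf - vc) * kj := by
    have h := hK
    have h2 : 2 * K ≤ (vf - vc) * kj / vf + kj := by linarith
    have h3 : (vf - vc) * kj / vf = ((vf - vc) * kj) / vf := rfl
    nlinarith [mul_le_mul_of_nonneg_left h2 (le_of_lt hvf),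
      mul_div_cancel₀ ((vf - vc) * kj) hvfne]
  have htgt : vc - vc * kj / (2 * K) = (vc * (2 * K) - vc * kj) / (2 * K) := by
    rw [sub_div, mul_div_cancel_right₀ _ hKne]
  constructor
  · rintro ⟨k1, k2⟩ ⟨h1, h2, h3, h4, h5⟩
    simp only at h1 h2 h3 h4 h5
    have key : vc * (2 * K) - vc * kj ≤ k1 * G vf kj k1 + k2 * min vc (G vf kj k2) := by
      rcases min_cases vc (G vf kj k2) with ⟨hm, hle⟩ | ⟨hm, hle⟩
      · rw [hm]
        have hG1 : 0 ≤ G vf kj k1 := by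
          unfold G
          have : k1 / kj ≤ 1 := (div_le_one hkj).2 h2
          nlinarith
        nlinarith [mul_nonneg h1 hG1, mul_nonneg (le_of_lt hvc0) (sub_nonneg.2 h2)]
      · rw [hm]
        unfold G
        have e1 : k1 * (vf * (1 - k1 / kj)) = vf * k1 * (kj - k1) / kj := by
          field_simp
        have e2 : k2 * (vf * (1 - k2 / kj)) = vf * k2 * (kj - k2) / kj := by
          field_simp
        rw [e1, e2, ← add_div, le_div_iff₀ hkj]
        have t1 : 0 ≤ vf * ((kj - k1) * (kj - k2)) :=
          mul_nonneg hvf.le (mul_nonneg (sub_nonneg.2 h2) (sub_nonneg.2 h4))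
        have hq : vc * kj ≤ vf * (2 * kj - (k1 + k2)) := by nlinarith
        have t2 : 0 ≤ (k1 + k2 - kj) * (vf * (2 * kj - (k1 + k2)) - vc * kj) :=
          mul_nonneg (by linarith) (by linarith)
        rw [← h5]
        nlinarith [t1, t2]
    rw [htgt]
    unfold W
    rw [h5]
    exact (div_le_div_iff_of_pos_right hK2).2 key
  · have hmem : (kj, 2 * K - kj) ∈ SK kj K := by
      refine ⟨hkj.le, le_refl kj, ?_, ?_, ?_⟩
      · show (0:ℝ) ≤ 2 * K - kj
        linarith
      · show 2 * K - kj ≤ kj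
        nlinarith
      · show kj + (2 * K - kj) = 2 * K
        ring
    refine ⟨hmem, ?_⟩
    have hG2 : vc ≤ G vf kj (2 * K - kj) := by
      unfold G
      rw [← sub_nonneg]
      have : vf * (1 - (2 * K - kj) / kj) - vc = (vf * (2 * kj - 2 * K) - vc * kj) / kj := by
        field_simp; ring
      rw [this]
      apply div_nonneg _ hkj.le
      nlinarith
    unfold G at hG2
    unfold W G
    rw [min_eq_left hG2]
    rw [div_self hkjne]
    have hsum : kj + (2 * K - kj) = 2 * K := by ring
    rw [hsum]
    rw [div_eq_iff hKne, htgt, div_mul_cancel₀ _ hKne]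
    ring
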